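/- Let (W,S) be a Coxeter system, I ⊆ S, and suppose (by the induction theorem for cells) that x ≤_L y in W implies pr_I(x) ≤_{L,I} pr_I(y) in W_I. Then for every left cell Γ of W_I, the set X_I·Γ = {xu | x ∈ X_I, u ∈ Γ} is left-closed in W, i.e., for all a,b ∈ X_I·Γ, {z ∈ W | a ≤_L z ≤_L b} ⊆ X_I·Γ; in particular X_I·Γ is a union of left cells of W. -/

import Mathlib

open CoxeterSystem List

noncomputable section
open scoped Classical

namespace StmtAux

variable {B W : Type*} [Group W] {M : CoxeterMatrix B} (cs : CoxeterSystem M W)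

local prefix:100 "s" => cs.simple
local prefix:100 "π" => cs.wordProd
local prefix:100 "ℓ" => cs.length
local prefix:100 "ris" => cs.rightInvSeq

lemma conj_eq_iff (a b t : W) : a * t * a⁻¹ = b ↔ t = a⁻¹ * b * a := by
  constructor
  · intro h; rw [← h]; group
  · intro h; rw [h]; group

lemma simple_conj_eq_iff (i : B) (t : W) :
    s i * t * s i = s i ↔ t = s i := by
  have h : s i * t * s i = s i * t * (s i)⁻¹ := by rw [cs.inv_simple]
  rw [h, conj_eq_iff, cs.inv_simple, cs.simple_mul_simple_cancel_right]

/-- The reflection permutation representation on `W × ZMod 2`. -/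
def fAux (i : B) : W × ZMod 2 → W × ZMod 2 :=
  fun p => (s i * p.1 * s i, p.2 + if p.1 = s i then 1 else 0)

lemma fAux_invol (i : B) : Function.Involutive (fAux cs i) := by
  intro p
  obtain ⟨t, z⟩ := p
  unfold fAux
  dsimp only
  refine Prod.ext ?_ ?_
  · dsimp only
    rw [mul_assoc (s i) t (s i), cs.simple_mul_simple_cancel_left,
      cs.simple_mul_simple_cancel_right]
  · dsimp only
    rw [simple_conj_eq_iff]
    by_cases ht : t = s i
    · subst ht
      simp only [if_pos rfl]
      revert z; decide
    · simp [ht]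

def fPerm (i : B) : Equiv.Perm (W × ZMod 2) := (fAux_invol cs i).toPerm

lemma fPerm_apply (i : B) (p : W × ZMod 2) :
    fPerm cs i p = (s i * p.1 * s i, p.2 + if p.1 = s i then 1 else 0) := rfl

lemma abstract1 {G : Type*} [Group G] (u v : G) (k : ℕ)
    (h : (u^k)⁻¹ * v * u^k = v * u^(2*k)) :
    (u^k)⁻¹ * (v * u) * u^k = v * u^(2*k+1) := by
  calc (u^k)⁻¹ * (v*u) * u^k = ((u^k)⁻¹ * v * u^k) * ((u^k)⁻¹ * u * u^k) := by group
    _ = v * u^(2*k) * ((u^k)⁻¹ * u * u^k) := by rw [h]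
    _ = v * u^(2*k+1) := by group

lemma conjpow (i j : B) : ∀ k : ℕ,
    ((s i * s j)⁻¹) ^ k * s j * (s i * s j) ^ k = s j * (s i * s j) ^ (2 * k)
  | 0 => by simp
  | (k + 1) => by
    have ih := conjpow i j k
    have h1 : ((s i * s j)⁻¹) ^ (k+1) * s j * (s i * s j) ^ (k+1)
        = (s i * s j)⁻¹ * (((s i * s j)⁻¹) ^ k * s j * (s i * s j) ^ k) * (s i * s j) := by
      rw [pow_succ', pow_succ]
      group
    rw [h1, ih]
    have h2 : (s i * s j)⁻¹ * s j = s j * (s i * s j) := by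
      rw [mul_inv_rev, cs.inv_simple, cs.inv_simple, mul_assoc]
    calc (s i * s j)⁻¹ * (s j * (s i * s j) ^ (2*k)) * (s i * s j)
        = ((s i * s j)⁻¹ * s j) * ((s i * s j) ^ (2*k) * (s i * s j)) := by group
      _ = s j * ((s i * s j) * ((s i * s j) ^ (2*k) * (s i * s j))) := by
            rw [h2, mul_assoc]
      _ = s j * (s i * s j) ^ (2*(k+1)) := by
            congr 1
            rw [show 2*(k+1) = 1 + (2*k+1) by ring, pow_add, pow_add, pow_one]

lemma fPerm_liftable : M.IsLiftable (fPerm cs) := by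
  intro i j
  have key : ∀ k : ℕ, ∀ t : W, ∀ z : ZMod 2,
      ((fPerm cs i * fPerm cs j) ^ k) (t, z) =
      ((s i * s j) ^ k * t * ((s i * s j) ^ k)⁻¹,
        z + ∑ q ∈ Finset.range (2 * k),
          (if t = s j * (s i * s j) ^ q then (1 : ZMod 2) else 0)) := by
    intro k
    induction k with
    | zero => intro t z; simp
    | succ k ih =>
      intro t z
      rw [pow_succ', Equiv.Perm.mul_apply, ih t z]
      rw [Equiv.Perm.mul_apply, fPerm_apply, fPerm_apply]
      dsimp only
      have e1 : ((s i * s j) ^ k * t * ((s i * s j) ^ k)⁻¹ = s j)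
          ↔ (t = s j * (s i * s j) ^ (2*k)) := by
        rw [conj_eq_iff, ← inv_pow, conjpow cs i j k]
      have e2 : (s j * ((s i * s j) ^ k * t * ((s i * s j) ^ k)⁻¹) * s j = s i)
          ↔ (t = s j * (s i * s j) ^ (2*k+1)) := by
        have hsj : ∀ X : W, s j * X * s j = s i ↔ X = s j * s i * s j := by
          intro X
          have h : s j * X * s j = s j * X * (s j)⁻¹ := by rw [cs.inv_simple]
          rw [h, conj_eq_iff, cs.inv_simple]
        rw [hsj, conj_eq_iff]
        have hval : ((s i * s j) ^ k)⁻¹ * (s j * s i * s j) * (s i * s j) ^ k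
            = s j * (s i * s j) ^ (2*k+1) := by
          have hc : ((s i * s j) ^ k)⁻¹ * s j * (s i * s j) ^ k
              = s j * (s i * s j) ^ (2*k) := by
            rw [← inv_pow]; exact conjpow cs i j k
          rw [mul_assoc (s j) (s i) (s j)]
          exact abstract1 (s i * s j) (s j) k hc
        rw [hval]
      refine Prod.ext ?_ ?_
      · dsimp only
        rw [pow_succ']
        simp only [mul_inv_rev, cs.inv_simple]
        group
      · dsimp only
        rw [show 2*(k+1) = (2*k) + 1 + 1 by ring, Finset.sum_range_succ,
          Finset.sum_range_succ]
        simp only [e1, e2]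
        ring
  apply Equiv.ext
  rintro ⟨t, z⟩
  rw [key (M i j) t z]
  have hwm : (s i * s j) ^ M i j = 1 := cs.simple_mul_simple_pow i j
  have hsum : ∑ q ∈ Finset.range (2 * M i j),
      (if t = s j * (s i * s j) ^ q then (1 : ZMod 2) else 0) = 0 := by
    rw [two_mul, Finset.sum_range_add]
    have hper : ∀ q : ℕ, (s i * s j) ^ (M i j + q) = (s i * s j) ^ q := by
      intro q; rw [pow_add, hwm, one_mul]
    simp only [hper]
    have h2 : ∀ a : ZMod 2, a + a = 0 := by decide
    rw [← Finset.sum_add_distrib]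
    simp only [h2]
    exact Finset.sum_const_zero
  rw [hsum, hwm]
  simp

/-- The lifted representation `W →* Perm (W × ZMod 2)`. -/
def Phi : W →* Equiv.Perm (W × ZMod 2) := cs.lift ⟨fPerm cs, fPerm_liftable cs⟩

lemma Phi_simple (i : B) : Phi cs (s i) = fPerm cs i :=
  cs.lift_apply_simple (fPerm_liftable cs) i

/-- Parity of the number of occurrences of `t` in the right inversion sequence. -/
def NN (ω : List B) (t : W) : ZMod 2 := ((ris ω).count t : ZMod 2)

lemma Phi_wordProd (ω : List B) (t : W) (z : ZMod 2) :
    Phi cs (π ω) (t, z) = (π ω * t * (π ω)⁻¹, z + NN cs ω t) := by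
  induction ω generalizing z with
  | nil => simp [NN]
  | cons i ω ih =>
    rw [cs.wordProd_cons, map_mul, Equiv.Perm.mul_apply, ih z, Phi_simple, fPerm_apply]
    dsimp only
    refine Prod.ext ?_ ?_
    · dsimp only
      rw [mul_inv_rev, cs.inv_simple]
      group
    · dsimp only
      have hris : ris (i :: ω) = ((π ω)⁻¹ * s i * π ω) :: ris ω := rfl
      have hcount : NN cs (i :: ω) t
          = NN cs ω t + (if (π ω)⁻¹ * s i * π ω = t then 1 else 0) := by
        rw [NN, NN, hris, List.count_cons]
        push_cast
        ring_nf
        by_cases h : (π ω)⁻¹ * s i * π ω = t <;> simp [h]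
      rw [hcount]
      have hiff : (π ω * t * (π ω)⁻¹ = s i) ↔ ((π ω)⁻¹ * s i * π ω = t) := by
        rw [conj_eq_iff]
        constructor
        · intro h; rw [h]
        · intro h; rw [h]
      rw [if_congr hiff rfl rfl]
      ring

/-- `NN` only depends on the product of the word. -/
lemma NN_eq_of_wordProd_eq {ω ω' : List B} (h : π ω = π ω') (t : W) :
    NN cs ω t = NN cs ω' t := by
  have h1 := Phi_wordProd cs ω t 0
  have h2 := Phi_wordProd cs ω' t 0
  rw [h] at h1
  rw [h1] at h2
  have := congrArg Prod.snd h2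
  dsimp at this
  rw [zero_add, zero_add] at this
  exact this

/-- Right exchange property. -/
lemma exchange_mem {ω : List B} (hred : cs.IsReduced ω) (i : B)
    (hdesc : ℓ (π ω * s i) < ℓ (π ω)) : s i ∈ ris ω := by
  -- construct an alternative reduced word for π ω ending in i
  obtain ⟨σ, hσred, hσ⟩ := cs.exists_reduced_word' (π ω * s i)
  have hlen : ℓ (π ω * s i) = ℓ (π ω) - 1 := by
    rcases cs.length_mul_simple (π ω) i with h | h
    · omega
    · omega
  set ω₂ := σ.concat i with hω₂
  have hπω₂ : π ω₂ = π ω := by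
    rw [hω₂, cs.wordProd_concat, ← hσ, mul_assoc, cs.simple_mul_simple_self, mul_one]
  have hposlen : 1 ≤ ℓ (π ω) := by omega
  have hω₂red : cs.IsReduced ω₂ := by
    unfold CoxeterSystem.IsReduced
    rw [hπω₂, hω₂, List.length_concat]
    have h5 : ℓ (cs.wordProd σ) = ℓ (π ω * s i) := by rw [hσ]
    rw [CoxeterSystem.IsReduced] at hσred
    omega
  have hmem : s i ∈ ris ω₂ := by
    rw [hω₂, cs.rightInvSeq_concat]
    simp
  have hcount2 : (ris ω₂).count (s i) = 1 :=
    List.count_eq_one_of_mem (hω₂red.nodup_rightInvSeq) hmem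
  have hNN : NN cs ω (s i) = NN cs ω₂ (s i) := NN_eq_of_wordProd_eq cs hπω₂.symm _
  by_contra hnot
  have : (ris ω).count (s i) = 0 := List.count_eq_zero_of_not_mem hnot
  rw [NN, NN, this, hcount2] at hNN
  norm_num at hNN

/-- Right exchange: erasing a letter. -/
lemma exchange_erase {ω : List B} (hred : cs.IsReduced ω) (i : B)
    (hdesc : ℓ (π ω * s i) < ℓ (π ω)) :
    ∃ j < ω.length, π ω * s i = π (ω.eraseIdx j) := by
  have hmem := exchange_mem cs hred i hdesc
  obtain ⟨j, hj, hjeq⟩ := List.getElem_of_mem hmem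
  rw [cs.length_rightInvSeq] at hj
  refine ⟨j, hj, ?_⟩
  have := cs.wordProd_mul_getD_rightInvSeq ω j
  rw [List.getD_eq_getElem _ _ (by rw [cs.length_rightInvSeq]; exact hj), hjeq] at this
  exact this

variable (I : Set B)

/-- `ω` is a word with letters in `I`. -/
def IWord (ω : List B) : Prop := ∀ b ∈ ω, b ∈ I

lemma iword_append {ω ω' : List B} (h : IWord I ω) (h' : IWord I ω') :
    IWord I (ω ++ ω') := by
  intro b hb
  rcases List.mem_append.mp hb with hb | hb
  · exact h b hb
  · exact h' b hb

lemma iword_reverse {ω : List B} (h : IWord I ω) : IWord I ω.reverse := by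
  intro b hb
  exact h b (List.mem_reverse.mp hb)

/-- Every element of the parabolic subgroup is the product of a word with letters in `I`. -/
lemma closure_word {v : W} (hv : v ∈ Subgroup.closure (cs.simple '' I)) :
    ∃ τ, IWord I τ ∧ π τ = v := by
  induction hv using Subgroup.closure_induction with
  | mem x hx =>
    obtain ⟨i, hi, rfl⟩ := hx
    refine ⟨[i], ?_, by simp⟩
    intro b hb
    simp only [List.mem_singleton] at hb
    exact hb ▸ hi
  | one => exact ⟨[], by intro b hb; simp at hb, by simp⟩
  | mul x y hx hy ihx ihy =>
    obtain ⟨τ₁, h1, rfl⟩ := ihx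
    obtain ⟨τ₂, h2, rfl⟩ := ihy
    exact ⟨τ₁ ++ τ₂, iword_append I h1 h2, cs.wordProd_append τ₁ τ₂⟩
  | inv x hx ihx =>
    obtain ⟨τ, h1, rfl⟩ := ihx
    exact ⟨τ.reverse, iword_reverse I h1, cs.wordProd_reverse τ⟩

/-- Existence of a minimal-length `I`-word for an element of the parabolic subgroup. -/
lemma min_word {v : W} (hv : ∃ τ, IWord I τ ∧ π τ = v) :
    ∃ σ, IWord I σ ∧ π σ = v ∧ ∀ τ, IWord I τ → π τ = v → σ.length ≤ τ.length := by
  classical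
  have hex : ∃ n, ∃ τ, IWord I τ ∧ π τ = v ∧ τ.length = n := by
    obtain ⟨τ, h1, h2⟩ := hv
    exact ⟨τ.length, τ, h1, h2, rfl⟩
  obtain ⟨σ, h1, h2, h3⟩ := Nat.find_spec hex
  refine ⟨σ, h1, h2, ?_⟩
  intro τ hτ hτv
  rw [h3]
  exact Nat.find_min' hex ⟨τ, hτ, hτv, rfl⟩

/-- Existence of a minimal-length representative of the coset `w W_I`. -/
lemma min_rep (w : W) :
    ∃ x, (∃ τ, IWord I τ ∧ w = x * π τ) ∧
      ∀ y τ, IWord I τ → w = y * π τ → ℓ x ≤ ℓ y := by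
  classical
  have hex : ∃ n, ∃ x, (∃ τ, IWord I τ ∧ w = x * π τ) ∧ ℓ x = n := by
    exact ⟨ℓ w, w, ⟨[], by intro b hb; simp at hb, by simp⟩, rfl⟩
  obtain ⟨x, h1, h2⟩ := Nat.find_spec hex
  refine ⟨x, h1, ?_⟩
  intro y τ hτ hw
  rw [h2]
  exact Nat.find_min' hex ⟨y, ⟨τ, hτ, hw⟩, rfl⟩

/-- A minimal coset representative is below all elements of its coset. -/
lemma min_rep_le {w x : W} (hx : ∃ τ, IWord I τ ∧ w = x * π τ)
    (hmin : ∀ y τ, IWord I τ → w = y * π τ → ℓ x ≤ ℓ y) :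
    ∀ τ, IWord I τ → ℓ x ≤ ℓ (x * π τ) := by
  intro τ hτ
  obtain ⟨τ₀, hτ₀, hw⟩ := hx
  refine hmin (x * π τ) (τ.reverse ++ τ₀) (iword_append I (iword_reverse I hτ) hτ₀) ?_
  rw [cs.wordProd_append, cs.wordProd_reverse]
  rw [mul_assoc, ← mul_assoc (π τ), mul_inv_cancel, one_mul]
  exact hw

/-- Key additivity: if `x` is a minimal coset representative and `σ` a minimal `I`-word,
then lengths add. -/
lemma addlen : ∀ n : ℕ, ∀ x : W, (∀ τ, IWord I τ → ℓ x ≤ ℓ (x * π τ)) →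
    ∀ σ : List B, IWord I σ →
    (∀ τ, IWord I τ → π τ = π σ → σ.length ≤ τ.length) →
    σ.length = n → ℓ (x * π σ) = ℓ x + n := by
  intro n
  induction n using Nat.strong_induction_on with
  | _ n ih =>
    intro x hminx σ hσI hσmin hσlen
    match n, hσlen with
    | 0, hσlen =>
      have : σ = [] := List.eq_nil_of_length_eq_zero hσlen
      subst this
      simp
    | (n+1), hσlen =>
      have hσne : σ ≠ [] := by
        intro h; rw [h] at hσlen; simp at hσlen
      set i := σ.getLast hσne with hi
      set σ' := σ.dropLast with hσ'
      have hsplit : σ' ++ [i] = σ := List.dropLast_append_getLast hσne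
      have hσ'len : σ'.length = n := by
        rw [hσ', List.length_dropLast, hσlen]
        omega
      have hσ'I : IWord I σ' := fun b hb => hσI b (List.dropLast_subset σ hb)
      have hiI : i ∈ I := hσI i (List.getLast_mem hσne)
      have hπσ : π σ = π σ' * s i := by
        conv_lhs => rw [← hsplit]
        rw [cs.wordProd_append]
        simp
      have hσ'min : ∀ τ, IWord I τ → π τ = π σ' → σ'.length ≤ τ.length := by
        intro τ hτ hτv
        have h1 : IWord I (τ ++ [i]) := by
          refine iword_append I hτ ?_
          intro b hb
          simp only [List.mem_singleton] at hb
          exact hb ▸ hiI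
        have h2 : π (τ ++ [i]) = π σ := by
          rw [cs.wordProd_append, hτv, hπσ]
          simp
        have := hσmin (τ ++ [i]) h1 h2
        rw [List.length_append, List.length_singleton, hσlen] at this
        omega
      have hIH : ℓ (x * π σ') = ℓ x + n :=
        ih n (by omega) x hminx σ' hσ'I hσ'min hσ'len
      have hIH1 : ℓ (π σ') = n := by
        have := ih n (by omega) 1 (by intro τ hτ; simp) σ' hσ'I hσ'min hσ'len
        simpa using this
      rcases cs.length_mul_simple (x * π σ') i with hcase | hcase
      · rw [hπσ, ← mul_assoc, hcase, hIH]
        omega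
      · -- impossible case
        exfalso
        obtain ⟨ωx, hωxred, hωx⟩ := cs.exists_reduced_word' x
        have hωxlen : ωx.length = ℓ x := by
          rw [CoxeterSystem.IsReduced] at hωxred; rw [← hωxred, ← hωx]
        have hΩred : cs.IsReduced (ωx ++ σ') := by
          rw [CoxeterSystem.IsReduced, cs.wordProd_append, ← hωx, hIH,
            List.length_append, hωxlen, hσ'len]
        have hdesc : ℓ (π (ωx ++ σ') * s i) < ℓ (π (ωx ++ σ')) := by
          rw [cs.wordProd_append, ← hωx]
          omega
        obtain ⟨j, hj, hjer⟩ := exchange_erase cs hΩred i hdesc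
        rw [List.length_append, hωxlen, hσ'len] at hj
        by_cases hjx : j < ℓ x
        · -- erase in the `x` part: contradicts minimality of `x` in its coset
          rw [List.eraseIdx_append_of_lt_length (by omega : j < ωx.length) σ'] at hjer
          rw [cs.wordProd_append (ωx.eraseIdx j) σ', cs.wordProd_append, ← hωx] at hjer
          -- x * π σ' * s i = x̂ * π σ'
          set xhat := π (ωx.eraseIdx j) with hxhat
          have hxhatlen : ℓ xhat ≤ ℓ x - 1 := by
            calc ℓ xhat ≤ (ωx.eraseIdx j).length := cs.length_wordProd_le _
              _ = ωx.length - 1 := by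
                  rw [List.length_eraseIdx]
                  simp [show j < ωx.length by omega]
              _ = ℓ x - 1 := by rw [hωxlen]
          have hxhateq : xhat = x * π (σ' ++ [i] ++ σ'.reverse) := by
            rw [cs.wordProd_append, cs.wordProd_append, cs.wordProd_reverse]
            simp only [cs.wordProd_singleton]
            have : xhat * π σ' = x * π σ' * s i := hjer.symm
            calc xhat = (xhat * π σ') * (π σ')⁻¹ := by group
              _ = (x * π σ' * s i) * (π σ')⁻¹ := by rw [this]
              _ = x * (π σ' * s i * (π σ')⁻¹) := by group
          have hIw : IWord I (σ' ++ [i] ++ σ'.reverse) := by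
            refine iword_append I (iword_append I hσ'I ?_) (iword_reverse I hσ'I)
            intro b hb
            simp only [List.mem_singleton] at hb
            exact hb ▸ hiI
          have := hminx (σ' ++ [i] ++ σ'.reverse) hIw
          rw [← hxhateq] at this
          omega
        · -- erase in the `σ'` part: contradicts minimality of `σ`
          rw [List.eraseIdx_append_of_length_le (by omega : ωx.length ≤ j) σ'] at hjer
          rw [cs.wordProd_append ωx, cs.wordProd_append ωx, ← hωx] at hjer
          have hcancel : π σ' * s i = π (σ'.eraseIdx (j - ωx.length)) := by
            have h9 : x * (π σ' * s i) = x * π (σ'.eraseIdx (j - ωx.length)) := by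
              rw [← mul_assoc]; exact hjer
            exact mul_left_cancel h9
          have hIer : IWord I (σ'.eraseIdx (j - ωx.length)) :=
            fun b hb => hσ'I b (List.eraseIdx_subset hb)
          have hπer : π (σ'.eraseIdx (j - ωx.length)) = π σ := by
            rw [← hcancel, hπσ]
          have := hσmin _ hIer hπer
          have hjs : j - ωx.length < σ'.length := by rw [hσ'len]; omega
          have hlenle : (σ'.eraseIdx (j - ωx.length)).length = n - 1 := by
            rw [List.length_eraseIdx, if_pos hjs, hσ'len]
          omega

/-- An element satisfying the descent condition is the minimal coset representative. -/
lemma descent_eq_minRep (w x₀ x : W)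
    (h₀ : ∃ τ, IWord I τ ∧ w = x₀ * π τ)
    (hmin : ∀ y τ, IWord I τ → w = y * π τ → ℓ x₀ ≤ ℓ y)
    (hxdesc : ∀ i ∈ I, ℓ x < ℓ (x * s i))
    (hx : ∃ τ, IWord I τ ∧ w = x * π τ) : x = x₀ := by
  obtain ⟨τ₀, hτ₀, hw₀⟩ := h₀
  obtain ⟨τx, hτx, hwx⟩ := hx
  have hminx0 : ∀ τ, IWord I τ → ℓ x₀ ≤ ℓ (x₀ * π τ) :=
    min_rep_le cs I ⟨τ₀, hτ₀, hw₀⟩ hmin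
  have hρI : IWord I (τ₀ ++ τx.reverse) := iword_append I hτ₀ (iword_reverse I hτx)
  have hρ : x = x₀ * π (τ₀ ++ τx.reverse) := by
    rw [cs.wordProd_append, cs.wordProd_reverse, ← mul_assoc, ← hw₀, hwx]
    group
  obtain ⟨σ, hσI, hσπ, hσmin⟩ := min_word cs I ⟨τ₀ ++ τx.reverse, hρI, rfl⟩
  have hxσ : x = x₀ * π σ := by rw [hρ, ← hσπ]
  by_cases hσnil : σ = []
  · rw [hxσ, hσnil, cs.wordProd_nil, mul_one]
  · exfalso
    set i := σ.getLast hσnil with hi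
    set σ' := σ.dropLast with hσ'
    have hsplit : σ' ++ [i] = σ := List.dropLast_append_getLast hσnil
    have hσ'I : IWord I σ' := fun b hb => hσI b (List.dropLast_subset σ hb)
    have hiI : i ∈ I := hσI i (List.getLast_mem hσnil)
    have hπσ : π σ = π σ' * s i := by
      conv_lhs => rw [← hsplit]
      rw [cs.wordProd_append]
      simp
    have hadd : ℓ (x₀ * π σ) = ℓ x₀ + σ.length := by
      refine addlen cs I σ.length x₀ hminx0 σ hσI ?_ rfl
      intro τ hτ hτπ
      exact hσmin τ hτ (by rw [hτπ, hσπ])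
    have hσpos : 1 ≤ σ.length := by
      rcases σ with _ | ⟨a, l⟩
      · exact absurd rfl hσnil
      · simp
    have hσ'len : σ'.length = σ.length - 1 := by
      rw [hσ', List.length_dropLast]
    have hup : ℓ (x * s i) ≤ ℓ x₀ + σ.length - 1 := by
      have hxsi : x * s i = x₀ * π σ' := by
        rw [hxσ, hπσ, ← mul_assoc, mul_assoc (x₀ * π σ'), cs.simple_mul_simple_self,
          mul_one]
      rw [hxsi]
      calc ℓ (x₀ * π σ') ≤ ℓ x₀ + ℓ (π σ') := cs.length_mul_le x₀ (π σ')
        _ ≤ ℓ x₀ + σ'.length := by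
            have := cs.length_wordProd_le σ'
            omega
        _ = ℓ x₀ + σ.length - 1 := by omega
    have hdown := hxdesc i hiI
    have hlx : ℓ x = ℓ x₀ + σ.length := by rw [hxσ, hadd]
    omega

/-- Uniqueness of the parabolic factor in the decomposition `w = x·u`. -/
lemma factor_unique (w x u x' u' : W)
    (hxdesc : ∀ i ∈ I, ℓ x < ℓ (x * s i))
    (hx'desc : ∀ i ∈ I, ℓ x' < ℓ (x' * s i))
    (hu : ∃ τ, IWord I τ ∧ π τ = u) (hu' : ∃ τ, IWord I τ ∧ π τ = u')
    (hw : w = x * u) (hw' : w = x' * u') : u = u' := by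
  obtain ⟨x₀, h₀, hmin⟩ := min_rep cs I w
  obtain ⟨τu, hτu, hτuπ⟩ := hu
  obtain ⟨τu', hτu', hτu'π⟩ := hu'
  have e1 : x = x₀ :=
    descent_eq_minRep cs I w x₀ x h₀ hmin hxdesc ⟨τu, hτu, by rw [hτuπ]; exact hw⟩
  have e2 : x' = x₀ :=
    descent_eq_minRep cs I w x₀ x' h₀ hmin hx'desc ⟨τu', hτu', by rw [hτu'π]; exact hw'⟩
  have : x * u = x' * u' := by rw [← hw, ← hw']
  rw [e1, e2] at this
  exact mul_left_cancel this

end StmtAux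

end

open CoxeterSystem

/-- Let `(W,S)` be a Coxeter system, `I ⊆ S`, with parabolic subgroup `W_I`,
distinguished coset representatives `X_I = {w | ℓ(ws) > ℓ(w) for all s ∈ I}` and
projection `pr_I : W → W_I` (so that `w·pr_I(w)⁻¹ ∈ X_I`).  Let `≤_L` be a relation on
`W` and `≤_{L,I}` a reflexive, transitive relation on `W_I`, and suppose (the induction
theorem for cells) that `x ≤_L y` implies `pr_I(x) ≤_{L,I} pr_I(y)`.  Then for every
left cell `Γ` of `W_I` (i.e. an equivalence class of `∼_{L,I}`), the set
`X_I·Γ = {xu | x ∈ X_I, u ∈ Γ}` is left-closed in `W`: for all `a, b ∈ X_I·Γ`,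
`{z | a ≤_L z ≤_L b} ⊆ X_I·Γ`; in particular `X_I·Γ` is a union of left cells of
`W`. -/
theorem stmt19 {B W : Type*} [Group W] {M : CoxeterMatrix B} (cs : CoxeterSystem M W)
    (I : Set B) (leL : W → W → Prop)
    (leLI : Subgroup.closure (cs.simple '' I) → Subgroup.closure (cs.simple '' I) →
      Prop)
    (hrefl : Reflexive leLI) (htrans : Transitive leLI)
    (prI : W → Subgroup.closure (cs.simple '' I))
    (hprI : ∀ w : W, ∀ i ∈ I, cs.length (w * ((prI w : W))⁻¹) <
      cs.length (w * ((prI w : W))⁻¹ * cs.simple i))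
    (hind : ∀ x y : W, leL x y → leLI (prI x) (prI y))
    (Γ : Set (Subgroup.closure (cs.simple '' I)))
    (u₀ : Subgroup.closure (cs.simple '' I))
    (hΓ : Γ = {u | leLI u u₀ ∧ leLI u₀ u}) :
    (∀ a ∈ {w : W | ∃ x : W, (∀ i ∈ I, cs.length x < cs.length (x * cs.simple i)) ∧
        ∃ u ∈ Γ, w = x * (u : W)},
      ∀ b ∈ {w : W | ∃ x : W, (∀ i ∈ I, cs.length x < cs.length (x * cs.simple i)) ∧
        ∃ u ∈ Γ, w = x * (u : W)},
      ∀ z : W, leL a z → leL z b →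
        z ∈ {w : W | ∃ x : W, (∀ i ∈ I, cs.length x < cs.length (x * cs.simple i)) ∧
          ∃ u ∈ Γ, w = x * (u : W)}) ∧
    ∀ z ∈ {w : W | ∃ x : W, (∀ i ∈ I, cs.length x < cs.length (x * cs.simple i)) ∧
        ∃ u ∈ Γ, w = x * (u : W)},
      ∀ z' : W, leL z z' → leL z' z →
        z' ∈ {w : W | ∃ x : W, (∀ i ∈ I, cs.length x < cs.length (x * cs.simple i)) ∧
          ∃ u ∈ Γ, w = x * (u : W)} := by
  have hproj : ∀ w x : W, (∀ i ∈ I, cs.length x < cs.length (x * cs.simple i)) →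
      ∀ u : Subgroup.closure (cs.simple '' I), w = x * (u : W) → prI w = u := by
    intro w x hx u hwu
    have h2 : ((prI w : W)) = (u : W) :=
      StmtAux.factor_unique cs I w (w * ((prI w : W))⁻¹) (prI w : W) x (u : W)
        (hprI w) hx
        (StmtAux.closure_word cs I (prI w).2)
        (StmtAux.closure_word cs I u.2)
        (by group) hwu
    exact Subtype.ext h2
  have memS : ∀ z : W, prI z ∈ Γ →
      z ∈ {w : W | ∃ x : W, (∀ i ∈ I, cs.length x < cs.length (x * cs.simple i)) ∧
        ∃ u ∈ Γ, w = x * (u : W)} :=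
    fun z hz => ⟨z * ((prI z : W))⁻¹, hprI z, prI z, hz, by group⟩
  have projmem : ∀ a ∈ {w : W | ∃ x : W,
      (∀ i ∈ I, cs.length x < cs.length (x * cs.simple i)) ∧
        ∃ u ∈ Γ, w = x * (u : W)}, prI a ∈ Γ := by
    rintro a ⟨x, hx, u, huΓ, hau⟩
    rw [hproj a x hx u hau]
    exact huΓ
  constructor
  · intro a ha b hb z haz hzb
    have h1 := hind a z haz
    have h2 := hind z b hzb
    have hA := projmem a ha
    have hB := projmem b hb
    rw [hΓ] at hA hB
    simp only [Set.mem_setOf_eq] at hA hB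
    refine memS z ?_
    rw [hΓ]
    exact ⟨htrans h2 hB.1, htrans hA.2 h1⟩
  · intro z hz z' hzz' hz'z
    have h1 := hind z z' hzz'
    have h2 := hind z' z hz'z
    have hZ := projmem z hz
    rw [hΓ] at hZ
    simp only [Set.mem_setOf_eq] at hZ
    refine memS z' ?_
    rw [hΓ]
    exact ⟨htrans h2 hZ.1, htrans hZ.2 h1⟩
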